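/- (Laplace evaluation identity) For any C¹ function f : ℝ → ℝ such that f and f' are integrable against the Laplace density, and for any x ∈ ℝ and a > 0: f(x) = E_{z ∼ Laplace(x,a)}[ f(z) + a·f'(z)·sign(x−z) ], where the Laplace(x,a) density is exp(−|x−z|/a)/(2a). -/

import Mathlib

open MeasureTheory

/-- Laplace evaluation identity: for a C¹ function `f` integrable (together with
its derivative) against the Laplace density,
`f(x) = E_{z ∼ Laplace(x,a)}[f(z) + a·f'(z)·sign(x-z)]`. -/
theorem laplace_evaluation_identity
    (a : ℝ) (ha : 0 < a) (x : ℝ)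
    (f : ℝ → ℝ) (hf : ContDiff ℝ 1 f)
    (hint₁ : Integrable (fun z => Real.exp (-|x - z| / a) * f z))
    (hint₂ : Integrable (fun z => Real.exp (-|x - z| / a) * deriv f z))
    (hdecayTop : Filter.Tendsto (fun z => Real.exp (-|x - z| / a) * f z)
      Filter.atTop (nhds 0))
    (hdecayBot : Filter.Tendsto (fun z => Real.exp (-|x - z| / a) * f z)
      Filter.atBot (nhds 0)) :
    f x = ∫ z, (Real.exp (-|x - z| / a) / (2 * a)) *
        (f z + a * deriv f z * Real.sign (x - z)) := by
  set G : ℝ → ℝ := fun z => (Real.exp (-|x - z| / a) / (2 * a)) *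
      (f z + a * deriv f z * Real.sign (x - z)) with hG
  have hderivf : ∀ z, HasDerivAt f (deriv f z) z :=
    fun z => (hf.differentiable one_ne_zero z).hasDerivAt
  -- functions on the two half lines
  set g₁ : ℝ → ℝ := fun z => Real.exp ((z - x) / a) * (f z + a * deriv f z) with hg₁
  set g₂ : ℝ → ℝ := fun z => Real.exp ((x - z) / a) * (f z - a * deriv f z) with hg₂
  have habs₁ : ∀ z ∈ Set.Iic x, Real.exp (-|x - z| / a) = Real.exp ((z - x) / a) := by
    intro z hz
    rw [abs_of_nonneg (by simpa using hz)]
    ring_nf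
  have habs₂ : ∀ z ∈ Set.Ici x, Real.exp (-|x - z| / a) = Real.exp ((x - z) / a) := by
    intro z hz
    rw [abs_of_nonpos (by simpa using hz)]
    ring_nf
  -- integrability on half lines
  have hint_g₁ : IntegrableOn g₁ (Set.Iic x) := by
    have := (hint₁.add (hint₂.const_mul a)).restrict (s := Set.Iic x)
    refine this.congr ?_
    rw [Filter.eventuallyEq_iff_exists_mem]
    refine ⟨Set.Iic x, self_mem_ae_restrict measurableSet_Iic, fun z hz => ?_⟩
    simp only [Pi.add_apply, hg₁, habs₁ z hz]
    ring
  have hint_g₂ : IntegrableOn g₂ (Set.Ioi x) := by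
    have := (hint₁.sub (hint₂.const_mul a)).restrict (s := Set.Ioi x)
    refine this.congr ?_
    rw [Filter.eventuallyEq_iff_exists_mem]
    refine ⟨Set.Ioi x, self_mem_ae_restrict measurableSet_Ioi, fun z hz => ?_⟩
    simp only [Pi.sub_apply, hg₂, habs₂ z (Set.Ioi_subset_Ici_self hz)]
    ring
  -- antiderivatives
  have hF₁ : ∀ z, HasDerivAt (fun z => a * Real.exp ((z - x) / a) * f z) (g₁ z) z := by
    intro z
    have h1 : HasDerivAt (fun z => a * Real.exp ((z - x) / a))
        (a * (Real.exp ((z - x) / a) * (1 / a))) z :=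
      ((((hasDerivAt_id z).sub_const x).div_const a).exp).const_mul a
    have : HasDerivAt (fun z => a * Real.exp ((z - x) / a) * f z) _ z := h1.mul (hderivf z)
    convert this using 1
    show Real.exp ((z - x) / a) * (f z + a * deriv f z) = _
    field_simp
  have hF₂ : ∀ z, HasDerivAt (fun z => -a * Real.exp ((x - z) / a) * f z) (g₂ z) z := by
    intro z
    have h0 : HasDerivAt (fun z : ℝ => (x - z) / a) (-1 / a) z := by
      simpa using (((hasDerivAt_id z).const_sub x).div_const a)
    have h1 : HasDerivAt (fun z => -a * Real.exp ((x - z) / a))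
        (-a * (Real.exp ((x - z) / a) * (-1 / a))) z :=
      (h0.exp).const_mul (-a)
    have : HasDerivAt (fun z => -a * Real.exp ((x - z) / a) * f z) _ z := h1.mul (hderivf z)
    convert this using 1
    show Real.exp ((x - z) / a) * (f z - a * deriv f z) = _
    field_simp
    ring
  -- limits
  have hlim₁ : Filter.Tendsto (fun z => a * Real.exp ((z - x) / a) * f z)
      Filter.atBot (nhds 0) := by
    have := hdecayBot.const_mul a
    rw [mul_zero] at this
    refine this.congr' ?_
    filter_upwards [Filter.Iic_mem_atBot x] with z hz
    rw [habs₁ z hz]; ring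
  have hlim₂ : Filter.Tendsto (fun z => -a * Real.exp ((x - z) / a) * f z)
      Filter.atTop (nhds 0) := by
    have := hdecayTop.const_mul (-a)
    rw [mul_zero] at this
    refine this.congr' ?_
    filter_upwards [Filter.Ici_mem_atTop x] with z hz
    rw [habs₂ z hz]; ring
  -- FTC on half lines
  have hI₁ : ∫ z in Set.Iic x, g₁ z = a * f x := by
    have := integral_Iic_of_hasDerivAt_of_tendsto' (fun z _ => hF₁ z) hint_g₁ hlim₁
    rw [this]; simp
  have hI₂ : ∫ z in Set.Ioi x, g₂ z = a * f x := by
    have := integral_Ioi_of_hasDerivAt_of_tendsto'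
      (f := fun z => -a * Real.exp ((x - z) / a) * f z) (fun z _ => hF₂ z) hint_g₂ hlim₂
    rw [this]; simp
  -- G agrees with (2a)⁻¹ • gᵢ on each half line
  have hGg₁ : ∀ᵐ z ∂(volume.restrict (Set.Iic x)), G z = (2 * a)⁻¹ * g₁ z := by
    have hx : ∀ᵐ z : ℝ ∂volume, z ≠ x := by
      simp [MeasureTheory.ae_iff, not_not, Set.setOf_eq_eq_singleton]

    filter_upwards [ae_restrict_of_ae hx, self_mem_ae_restrict measurableSet_Iic]
      with z hz hz'
    have hlt : z < x := lt_of_le_of_ne hz' hz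
    simp only [hG, hg₁, habs₁ z hz', Real.sign_of_pos (by linarith : (0:ℝ) < x - z)]
    ring
  have hGg₂ : ∀ᵐ z ∂(volume.restrict (Set.Ioi x)), G z = (2 * a)⁻¹ * g₂ z := by
    filter_upwards [self_mem_ae_restrict measurableSet_Ioi] with z hz
    have hlt : x < z := hz
    simp only [hG, hg₂, habs₂ z (le_of_lt hlt), Real.sign_of_neg (by linarith : x - z < 0)]
    ring
  have hIG₁ : ∫ z in Set.Iic x, G z = (2 * a)⁻¹ * (a * f x) := by
    rw [integral_congr_ae hGg₁, integral_const_mul, hI₁]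
  have hIG₂ : ∫ z in Set.Ioi x, G z = (2 * a)⁻¹ * (a * f x) := by
    rw [integral_congr_ae hGg₂, integral_const_mul, hI₂]
  have hsplit : (∫ z in Set.Iic x, G z) + (∫ z in Set.Ioi x, G z) = ∫ z, G z := by
    refine intervalIntegral.integral_Iic_add_Ioi ?_ ?_
    · exact ((hint_g₁.const_mul ((2*a)⁻¹)).congr (Filter.EventuallyEq.symm hGg₁))
    · exact ((hint_g₂.const_mul ((2*a)⁻¹)).congr (Filter.EventuallyEq.symm hGg₂))
  rw [← hsplit, hIG₁, hIG₂]
  field_simp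
  ring
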